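/- Let φ_0 be a constant M×N matrix and define φ(t) := e^{ξ(L)} φ_0 ( e^{ξ(R)}(I_N + K φ_0) - K e^{ξ(L)} φ_0 )^{-1} with ξ(A) = \sum_{n=1}^{N_0} t_n A^n (finitely many times t_1,...,t_{N_0}), where Q = RK - KL. Then, wherever the inverse exists, φ satisfies the matrix Riccati equations ∂_{t_n} φ = L^n φ - φ R^n - φ (R^n K - K L^n) φ for n = 1, ..., N_0. -/

import Mathlib

open Matrix

attribute [local instance]
  Matrix.linftyOpNormedAddCommGroup Matrix.linftyOpNormedSpace
  Matrix.linftyOpNormedRing Matrix.linftyOpNormedAlgebra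

namespace RiccatiAux

variable {a b c : ℕ}

lemma isBoundedBilinearMap_mul :
    IsBoundedBilinearMap ℝ
      (fun p : Matrix (Fin a) (Fin b) ℝ × Matrix (Fin b) (Fin c) ℝ => p.1 * p.2) where
  add_left x₁ x₂ y := Matrix.add_mul x₁ x₂ y
  smul_left c x y := Matrix.smul_mul c x y
  add_right x y₁ y₂ := Matrix.mul_add x y₁ y₂
  smul_right c x y := Matrix.mul_smul x c y
  bound := ⟨1, one_pos, fun x y => by
    simpa using Matrix.linfty_opNorm_mul x y⟩

lemma _root_.HasDerivAt.matMul {f : ℝ → Matrix (Fin a) (Fin b) ℝ}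
    {g : ℝ → Matrix (Fin b) (Fin c) ℝ} {f' g'} {x : ℝ}
    (hf : HasDerivAt f f' x) (hg : HasDerivAt g g' x) :
    HasDerivAt (fun s => f s * g s) (f' * g x + f x * g') x := by
  have h := (isBoundedBilinearMap_mul.hasFDerivAt (f x, g x)).comp_hasDerivAt x (hf.prodMk hg)
  simp only [IsBoundedBilinearMap.deriv_apply, Function.comp_def, add_comm] at h ⊢
  exact h

lemma hasDerivAt_entry {f : ℝ → Matrix (Fin a) (Fin b) ℝ} {f'} {x : ℝ}
    (h : HasDerivAt f f' x) (i : Fin a) (j : Fin b) :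
    HasDerivAt (fun s => f s i j) (f' i j) x := by
  let L : Matrix (Fin a) (Fin b) ℝ →L[ℝ] ℝ :=
    LinearMap.toContinuousLinearMap
      { toFun := fun A => A i j
        map_add' := fun _ _ => rfl
        map_smul' := fun _ _ => rfl }
  exact L.hasFDerivAt.comp_hasDerivAt x h

lemma hasDerivAt_exp_affine (C A : Matrix (Fin a) (Fin a) ℝ) (h : Commute C A) (x : ℝ) :
    HasDerivAt (fun s : ℝ => NormedSpace.exp (C + s • A))
      (A * NormedSpace.exp (C + x • A)) x := by
  have key : ∀ s : ℝ, NormedSpace.exp (C + s • A)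
      = NormedSpace.exp C * NormedSpace.exp (s • A) := fun s =>
    NormedSpace.exp_add_of_commute (h.smul_right s)
  have h1 : HasDerivAt (fun s : ℝ => NormedSpace.exp C * NormedSpace.exp (s • A))
      (NormedSpace.exp C * (A * NormedSpace.exp (x • A))) x :=
    (hasDerivAt_exp_smul_const' A x).const_mul _
  have hcomm : NormedSpace.exp C * A = A * NormedSpace.exp C :=
    (h.symm.exp_right.eq).symm
  simp only [funext key]
  convert h1 using 1
  rw [key, ← mul_assoc, ← mul_assoc, hcomm]

end RiccatiAux

/-- The explicit formula
`φ(t) = e^{ξ(L)} φ₀ (e^{ξ(R)}(1 + K φ₀) - K e^{ξ(L)} φ₀)⁻¹`,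
with `ξ(A) = ∑_{n=1}^{N₀} t_n A^n`, solves the matrix Riccati equations
`∂_{t_n} φ = L^n φ - φ R^n - φ (R^n K - K L^n) φ` wherever the inverse exists. -/
theorem riccati_explicit_solution
    {M N N₀ : ℕ}
    (R : Matrix (Fin N) (Fin N) ℝ) (L : Matrix (Fin M) (Fin M) ℝ)
    (K : Matrix (Fin N) (Fin M) ℝ) (φ₀ : Matrix (Fin M) (Fin N) ℝ)
    (Q : Matrix (Fin N) (Fin M) ℝ) (hQ : Q = R * K - K * L)
    (xiR : (Fin N₀ → ℝ) → Matrix (Fin N) (Fin N) ℝ)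
    (hxiR : ∀ t, xiR t = ∑ n : Fin N₀, t n • R ^ ((n : ℕ) + 1))
    (xiL : (Fin N₀ → ℝ) → Matrix (Fin M) (Fin M) ℝ)
    (hxiL : ∀ t, xiL t = ∑ n : Fin N₀, t n • L ^ ((n : ℕ) + 1))
    (G : (Fin N₀ → ℝ) → Matrix (Fin N) (Fin N) ℝ)
    (hG : ∀ t, G t = NormedSpace.exp (xiR t) * (1 + K * φ₀)
      - K * NormedSpace.exp (xiL t) * φ₀)
    (Φ : (Fin N₀ → ℝ) → Matrix (Fin M) (Fin N) ℝ)
    (hΦ : ∀ t, Φ t = NormedSpace.exp (xiL t) * φ₀ * (G t)⁻¹)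
    (t : Fin N₀ → ℝ) (ht : IsUnit (G t)) (n : Fin N₀) :
    ∀ (i : Fin M) (j : Fin N),
      HasDerivAt (fun s => Φ (Function.update t n s) i j)
        ((L ^ ((n : ℕ) + 1) * Φ t - Φ t * R ^ ((n : ℕ) + 1)
          - Φ t * (R ^ ((n : ℕ) + 1) * K - K * L ^ ((n : ℕ) + 1)) * Φ t) i j)
        (t n) := by
  intro i j
  have hupd : Function.update t n (t n) = t := Function.update_eq_self n t
  set AL : Matrix (Fin M) (Fin M) ℝ := L ^ ((n : ℕ) + 1) with hALdef
  set AR : Matrix (Fin N) (Fin N) ℝ := R ^ ((n : ℕ) + 1) with hARdef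
  set CL : Matrix (Fin M) (Fin M) ℝ :=
    ∑ m ∈ Finset.univ.erase n, t m • L ^ ((m : ℕ) + 1) with hCLdef
  set CR : Matrix (Fin N) (Fin N) ℝ :=
    ∑ m ∈ Finset.univ.erase n, t m • R ^ ((m : ℕ) + 1) with hCRdef
  have hxiLu : ∀ s : ℝ, xiL (Function.update t n s) = CL + s • AL := by
    intro s
    rw [hxiL, ← Finset.add_sum_erase _ _ (Finset.mem_univ n), Function.update_self, add_comm]
    congr 1
    exact Finset.sum_congr rfl fun m hm => by
      rw [Function.update_of_ne (Finset.ne_of_mem_erase hm)]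
  have hxiRu : ∀ s : ℝ, xiR (Function.update t n s) = CR + s • AR := by
    intro s
    rw [hxiR, ← Finset.add_sum_erase _ _ (Finset.mem_univ n), Function.update_self, add_comm]
    congr 1
    exact Finset.sum_congr rfl fun m hm => by
      rw [Function.update_of_ne (Finset.ne_of_mem_erase hm)]
  have hcommL : Commute CL AL :=
    Commute.sum_left _ _ _ fun m _ => (Commute.pow_pow_self L _ _).smul_left (t m)
  have hcommR : Commute CR AR :=
    Commute.sum_left _ _ _ fun m _ => (Commute.pow_pow_self R _ _).smul_left (t m)
  set F : Matrix (Fin M) (Fin M) ℝ := NormedSpace.exp (xiL t) with hF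
  set E : Matrix (Fin N) (Fin N) ℝ := NormedSpace.exp (xiR t) with hE
  have hEL : HasDerivAt (fun s : ℝ => NormedSpace.exp (xiL (Function.update t n s)))
      (AL * F) (t n) := by
    have h := RiccatiAux.hasDerivAt_exp_affine CL AL hcommL (t n)
    simp only [← hxiLu] at h
    rwa [hupd] at h
  have hER : HasDerivAt (fun s : ℝ => NormedSpace.exp (xiR (Function.update t n s)))
      (AR * E) (t n) := by
    have h := RiccatiAux.hasDerivAt_exp_affine CR AR hcommR (t n)
    simp only [← hxiRu] at h
    rwa [hupd] at h
  set G' : Matrix (Fin N) (Fin N) ℝ :=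
    AR * E * (1 + K * φ₀) - K * (AL * F) * φ₀ with hG'def
  have hGd : HasDerivAt (fun s => G (Function.update t n s)) G' (t n) := by
    have h1 : HasDerivAt
        (fun s => NormedSpace.exp (xiR (Function.update t n s)) * (1 + K * φ₀))
        (AR * E * (1 + K * φ₀)) (t n) := by
      simpa using hER.matMul (hasDerivAt_const (t n) (1 + K * φ₀))
    have h2 : HasDerivAt
        (fun s => K * NormedSpace.exp (xiL (Function.update t n s)) * φ₀)
        (K * (AL * F) * φ₀) (t n) := by
      have h := ((hasDerivAt_const (t n) K).matMul hEL).matMul (hasDerivAt_const (t n) φ₀)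
      simpa [hupd] using h
    have h := h1.sub h2
    exact h.congr_of_eventuallyEq (Filter.Eventually.of_forall fun s => hG _)
  set W : Matrix (Fin N) (Fin N) ℝ := (G t)⁻¹ with hWdef
  obtain ⟨u, hu⟩ := id ht
  have hWu : W = (↑u⁻¹ : Matrix (Fin N) (Fin N) ℝ) := by
    rw [hWdef, Matrix.nonsing_inv_eq_ringInverse, ← hu, Ring.inverse_unit]
  have hGinv : HasDerivAt (fun s => (G (Function.update t n s))⁻¹) (-(W * G' * W)) (t n) := by
    have h0 := hasFDerivAt_ringInverse (𝕜 := ℝ) u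
    rw [hu, ← hupd] at h0
    have h := h0.comp_hasDerivAt (t n) hGd
    simp only [ContinuousLinearMap.neg_apply, ContinuousLinearMap.mulLeftRight_apply,
      ← hWu] at h
    simp only [Matrix.nonsing_inv_eq_ringInverse]
    exact h
  have hΦd : HasDerivAt (fun s => Φ (Function.update t n s))
      ((AL * F) * φ₀ * W + (F * φ₀) * -(W * G' * W)) (t n) := by
    have h := (hEL.matMul (hasDerivAt_const (t n) φ₀)).matMul hGinv
    simp only [← hΦ] at h
    rw [hupd] at h
    simpa [hupd] using h
  have hΦt : Φ t = F * φ₀ * W := hΦ t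
  have hGW : G t * W = 1 :=
    Matrix.mul_nonsing_inv _ ((Matrix.isUnit_iff_isUnit_det _).mp ht)
  have key : G' = AR * G t + (AR * K - K * AL) * (F * φ₀) := by
    rw [hG'def, hG t, ← hE, ← hF]
    simp only [Matrix.mul_add, Matrix.add_mul, Matrix.mul_sub, Matrix.sub_mul,
      Matrix.mul_one, Matrix.one_mul, Matrix.mul_assoc]
    abel
  have hfinal : (AL * F) * φ₀ * W + (F * φ₀) * -(W * G' * W)
      = AL * Φ t - Φ t * AR - Φ t * (AR * K - K * AL) * Φ t := by
    rw [key, hΦt]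
    simp only [Matrix.mul_neg, Matrix.neg_mul, Matrix.mul_add, Matrix.add_mul,
      Matrix.mul_sub, Matrix.sub_mul, Matrix.mul_assoc, hGW, Matrix.mul_one]
    abel
  rw [hfinal] at hΦd
  exact RiccatiAux.hasDerivAt_entry hΦd i j
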